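/- arXiv:0902.3075 — 6 statements merged into one kernel-verified Lean document; each statement's English description precedes it below -/
import Mathlib

section
/- If d < n/2, then there exists a partition of V_n(q) consisting of q^{n-d} subspaces of dimension d and one subspace of dimension n - d. -/
open scoped Classical
open Polynomial

noncomputable section

variable (F : Type) [Field F] [Fintype F]

/-- A field extension of `F` of degree `m`. -/
def BigK (m : ℕ) : Type :=
  SplittingField (X ^ (Fintype.card F ^ m) - X : F[X])

instance (m : ℕ) : Field (BigK F m) := inferInstanceAs (Field (SplittingField _))
instance (m : ℕ) : Algebra F (BigK F m) := inferInstanceAs (Algebra F (SplittingField _))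
instance (m : ℕ) : FiniteDimensional F (BigK F m) := inferInstanceAs (FiniteDimensional F (SplittingField _))
instance (m : ℕ) : Finite (BigK F m) := Module.finite_of_finite F

theorem bigK_card (m : ℕ) (hm : m ≠ 0) :
    ∃ _ : Fintype (BigK F m), Fintype.card (BigK F m) = Fintype.card F ^ m := by
  haveI : Fintype (BigK F m) := Fintype.ofFinite _
  refine ⟨inferInstance, ?_⟩
  set q := Fintype.card F with hqdef
  set p := ringChar F with hpdef
  haveI hfact : Fact p.Prime := ⟨CharP.char_is_prime F p⟩
  obtain ⟨s, -, hqs⟩ := FiniteField.card F p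
  have hq1 : 1 < q := Fintype.one_lt_card
  haveI : CharP (BigK F m) p :=
    charP_of_injective_algebraMap (algebraMap F (BigK F m)).injective p
  set g_poly := (X ^ q ^ m - X : F[X]) with hg
  have aux : g_poly ≠ 0 := FiniteField.X_pow_card_pow_sub_X_ne_zero _ hm hq1
  have hsep : Separable g_poly := by
    apply galois_poly_separable p (q ^ m)
    have : p ∣ q := by rw [hqdef, hqs]; exact dvd_pow_self p s.ne_zero
    exact dvd_pow this hm
  have key : Fintype.card (g_poly.rootSet (BigK F m)) = g_poly.natDegree :=
    card_rootSet_eq_natDegree hsep (SplittingField.splits g_poly)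
  have nat_degree_eq : g_poly.natDegree = q ^ m :=
    FiniteField.X_pow_card_pow_sub_X_natDegree_eq _ hm hq1
  rw [nat_degree_eq] at key
  suffices hU : g_poly.rootSet (BigK F m) = Set.univ by
    simp_rw [hU, ← Fintype.ofEquiv_card (Equiv.Set.univ _)] at key
    convert key using 2
  rw [Set.eq_univ_iff_forall]
  suffices ∀ (x) (_ : x ∈ (⊤ : Subalgebra F (BigK F m))),
      x ∈ g_poly.rootSet (BigK F m) by simpa using this
  have : Algebra.adjoin F (g_poly.rootSet (BigK F m)) = ⊤ :=
    SplittingField.adjoin_rootSet g_poly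
  rw [← this]
  simp_rw [Algebra.mem_adjoin_iff]
  intro x hx
  refine Subring.closure_induction ?_ ?_ ?_ ?_ ?_ ?_ hx <;>
    simp_rw [mem_rootSet_of_ne aux]
  · rintro x (⟨r, rfl⟩ | hx)
    · simp only [g_poly, map_sub, map_pow, aeval_X]
      rw [← map_pow, FiniteField.pow_card_pow, sub_self]
    · rwa [mem_rootSet_of_ne aux] at hx
  · rw [← coeff_zero_eq_aeval_zero']
    simp only [g_poly, coeff_X_pow, coeff_X_zero, sub_zero, _root_.map_eq_zero, ite_eq_right_iff,
      one_ne_zero, coeff_sub]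
    intro hn
    exact absurd hn.symm (pow_ne_zero m (by omega))
  · simp [g_poly]
  · have hqm : q ^ m = p ^ ((s : ℕ) * m) := by rw [hqdef, hqs, pow_mul]
    simp only [g_poly, aeval_X_pow, aeval_X, map_sub, sub_eq_zero, hqm, add_pow_char_pow]
    intro x y _ _ hx hy
    rw [hx, hy]
  · have hqm : q ^ m = p ^ ((s : ℕ) * m) := by rw [hqdef, hqs, pow_mul]
    intro x _ hx
    simp only [g_poly, sub_eq_zero, aeval_X_pow, aeval_X, map_sub, hqm] at *
    rw [neg_pow, hx, neg_one_pow_char_pow]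
    simp
  · simp only [g_poly, aeval_X_pow, aeval_X, map_sub, mul_pow, sub_eq_zero]
    intro x y _ _ hx hy
    rw [hx, hy]

theorem bigK_finrank (m : ℕ) (hm : m ≠ 0) : Module.finrank F (BigK F m) = m := by
  obtain ⟨i, hc⟩ := bigK_card F m hm
  haveI j : Fintype (BigK F m) := i
  have h2 : Fintype.card (BigK F m) = Fintype.card F ^ Module.finrank F (BigK F m) :=
    Module.card_eq_pow_finrank
  refine Nat.pow_right_injective Fintype.one_lt_card (h2.symm.trans ?_)
  rw [Subsingleton.elim j i]; exact hc

/-- A partition of a vector space: a set of nonzero subspaces such that every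
nonzero vector lies in exactly one of them. -/
def IsVPartition {F V : Type*} [Field F] [AddCommGroup V] [Module F V]
    (P : Set (Submodule F V)) : Prop :=
  (∀ W ∈ P, W ≠ ⊥) ∧ ∀ v : V, v ≠ 0 → ∃! W : Submodule F V, W ∈ P ∧ v ∈ W

/-- The set of dimensions of components of a set of subspaces. -/
def DimSet {F V : Type*} [Field F] [AddCommGroup V] [Module F V]
    (P : Set (Submodule F V)) : Set ℕ :=
  {d | ∃ W ∈ P, Module.finrank F W = d}

/-- Extend a vector in `Fin d → F` by zeros to `Fin m → F`. -/
def padMap (d m : ℕ) : (Fin d → F) →ₗ[F] (Fin m → F) where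
  toFun y := fun i => if h2 : (i : ℕ) < d then y ⟨i, h2⟩ else 0
  map_add' y z := by funext i; by_cases h2 : (i : ℕ) < d <;> simp [h2]
  map_smul' c y := by funext i; by_cases h2 : (i : ℕ) < d <;> simp [h2]

theorem padMap_injective (d m : ℕ) (h : d ≤ m) : Function.Injective (padMap F d m) := by
  intro y z hyz
  funext k
  have := congrFun hyz ⟨k, lt_of_lt_of_le k.2 h⟩
  simpa [padMap, k.2] using this

set_option maxHeartbeats 1000000 in
theorem stmt6 (q n d : ℕ) (F : Type) [Field F] [Fintype F]
    (hq : Fintype.card F = q) (hd : 0 < d) (hdn : 2 * d < n) :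
    ∃ P : Finset (Submodule F (Fin n → F)),
      IsVPartition (↑P : Set (Submodule F (Fin n → F))) ∧
      (∀ W ∈ P, Module.finrank F W = d ∨ Module.finrank F W = n - d) ∧
      (P.filter (fun (W : Submodule F (Fin n → F)) => Module.finrank F W = d)).card = q ^ (n - d) ∧
      (P.filter (fun (W : Submodule F (Fin n → F)) => Module.finrank F W = n - d)).card = 1 := by
  set m := n - d with hmdef
  have hdm : d < m := by omega
  have hm : m ≠ 0 := by omega
  set K := BigK F m with hK
  obtain ⟨iK, hc⟩ := bigK_card F m hm
  haveI jK : Fintype K := iK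
  have hrk : Module.finrank F K = m := bigK_finrank F m hm
  have hcard : Fintype.card K = q ^ m := by
    rw [Subsingleton.elim jK iK, ← hq]; exact hc
  -- the injection ι : (Fin d → F) →ₗ[F] K
  let b : Module.Basis (Fin m) F K := Module.finBasisOfFinrankEq F K hrk
  let ι : (Fin d → F) →ₗ[F] K := b.equivFun.symm.toLinearMap ∘ₗ padMap F d m
  have hι : Function.Injective ι := by
    intro y z hyz
    exact padMap_injective F d m hdm.le (b.equivFun.symm.injective hyz)
  -- the ambient space V = K × (Fin d → F)
  have hVrank : Module.finrank F (K × (Fin d → F)) = n := by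
    rw [Module.finrank_prod, hrk, Module.finrank_fin_fun]; omega
  let E : (K × (Fin d → F)) ≃ₗ[F] (Fin n → F) :=
    LinearEquiv.ofFinrankEq _ _ (by rw [hVrank, Module.finrank_fin_fun])
  -- the components
  let g : K → ((Fin d → F) →ₗ[F] (K × (Fin d → F))) :=
    fun a => LinearMap.prod ((LinearMap.mulLeft F a) ∘ₗ ι) LinearMap.id
  let W : K → Submodule F (K × (Fin d → F)) := fun a => LinearMap.range (g a)
  let S0 : Submodule F (K × (Fin d → F)) := Submodule.fst F K (Fin d → F)
  have hmemW : ∀ (a : K) (v : K × (Fin d → F)), v ∈ W a ↔ v.1 = a * ι v.2 := by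
    rintro a ⟨x, y⟩
    constructor
    · rintro ⟨z, hz⟩
      obtain ⟨h1, h2⟩ := Prod.mk.injEq .. ▸ hz
      simp only [g, LinearMap.prod_apply, LinearMap.id_apply, LinearMap.comp_apply,
        LinearMap.mulLeft_apply, Pi.prod] at hz
      have h2 : z = y := congrArg Prod.snd hz
      have h1 : a * ι z = x := congrArg Prod.fst hz
      subst h2; exact h1.symm
    · intro h
      exact ⟨y, by simp only [g, LinearMap.prod_apply, LinearMap.id_apply, LinearMap.comp_apply,
        LinearMap.mulLeft_apply, Pi.prod]; exact Prod.ext h.symm rfl⟩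
  have hmemS0 : ∀ v : K × (Fin d → F), v ∈ S0 ↔ v.2 = 0 := by
    intro v
    simp [S0, Submodule.fst]
  have hrkW : ∀ a : K, Module.finrank F (W a) = d := by
    intro a
    have hginj : Function.Injective (g a) := by
      intro y z hyz
      exact congrArg Prod.snd hyz
    rw [show (W a : Submodule F _) = LinearMap.range (g a) from rfl,
      LinearMap.finrank_range_of_inj hginj, Module.finrank_fin_fun]
  have hrkS0 : Module.finrank F S0 = m := by
    rw [(Submodule.fstEquiv F K (Fin d → F)).finrank_eq, hrk]
  -- transported components
  let W' : K → Submodule F (Fin n → F) := fun a => (W a).map (E : _ →ₗ[F] _)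
  let S0' : Submodule F (Fin n → F) := S0.map (E : _ →ₗ[F] _)
  have hrkW' : ∀ a : K, Module.finrank F (W' a) = d := fun a => by
    rw [show W' a = (W a).map (E : _ →ₗ[F] _) from rfl, LinearEquiv.finrank_map_eq, hrkW]
  have hrkS0' : Module.finrank F S0' = m := by
    rw [show S0' = S0.map (E : _ →ₗ[F] _) from rfl, LinearEquiv.finrank_map_eq, hrkS0]
  have hmemW' : ∀ (a : K) (v : Fin n → F), v ∈ W' a ↔ (E.symm v).1 = a * ι (E.symm v).2 := by
    intro a v
    rw [show W' a = (W a).map (E : _ →ₗ[F] _) from rfl, Submodule.mem_map_equiv, hmemW]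
  have hmemS0' : ∀ v : Fin n → F, v ∈ S0' ↔ (E.symm v).2 = 0 := by
    intro v
    rw [show S0' = S0.map (E : _ →ₗ[F] _) from rfl, Submodule.mem_map_equiv, hmemS0]
  -- injectivity of a ↦ W' a
  have hy0 : ∃ y0 : Fin d → F, y0 ≠ 0 := by
    refine ⟨fun _ => 1, fun h => ?_⟩
    have := congrFun h ⟨0, hd⟩
    exact one_ne_zero this
  obtain ⟨y0, hy0⟩ := hy0
  have hιy0 : ι y0 ≠ 0 := fun h => hy0 (hι (by rw [h, map_zero]))
  have hWinj : Function.Injective W' := by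
    intro a b hab
    have hWab : W a = W b :=
      Submodule.map_injective_of_injective
        (f := (E : (K × (Fin d → F)) →ₗ[F] (Fin n → F))) E.injective hab
    have h1 : ((a * ι y0, y0) : K × (Fin d → F)) ∈ W a := (hmemW a _).2 rfl
    rw [hWab] at h1
    have h2 : a * ι y0 = b * ι y0 := (hmemW b _).1 h1
    exact mul_right_cancel₀ hιy0 h2
  -- the finset
  let P : Finset (Submodule F (Fin n → F)) := insert S0' (Finset.image W' Finset.univ)
  have hS0notW : S0' ∉ Finset.image W' Finset.univ := by
    intro h
    obtain ⟨a, -, ha⟩ := Finset.mem_image.1 h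
    rw [← ha] at hrkS0'
    rw [hrkW' a] at hrkS0'
    omega
  have hmemP : ∀ U : Submodule F (Fin n → F), U ∈ P ↔ U = S0' ∨ ∃ a : K, U = W' a := by
    intro U
    simp only [P, Finset.mem_insert, Finset.mem_image, Finset.mem_univ, true_and]
    constructor
    · rintro (h | ⟨a, ha⟩)
      · exact Or.inl h
      · exact Or.inr ⟨a, ha.symm⟩
    · rintro (h | ⟨a, ha⟩)
      · exact Or.inl h
      · exact Or.inr ⟨a, ha.symm⟩
  refine ⟨P, ⟨?_, ?_⟩, ?_, ?_, ?_⟩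
  · -- nonbot
    intro U hU hbot
    rcases (hmemP U).1 (by exact_mod_cast hU) with h | ⟨a, ha⟩
    · rw [h] at hbot; rw [hbot, finrank_bot] at hrkS0'; omega
    · have := hrkW' a; rw [← ha, hbot, finrank_bot] at this; omega
  · -- cover uniquely
    intro v hv
    have hEv : E.symm v ≠ 0 := fun h => hv (by
      have := congrArg E h
      rwa [LinearEquiv.apply_symm_apply, map_zero] at this)
    by_cases hsnd : (E.symm v).2 = 0
    · refine ⟨S0', ⟨(hmemP S0').2 (Or.inl rfl), (hmemS0' v).2 hsnd⟩, ?_⟩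
      rintro U ⟨hU, hvU⟩
      rcases (hmemP U).1 hU with h | ⟨a, ha⟩
      · exact h
      · exfalso
        subst ha
        have h1 := (hmemW' a v).1 hvU
        rw [hsnd, map_zero, mul_zero] at h1
        exact hEv (Prod.ext h1 hsnd)
    · have hιv : ι (E.symm v).2 ≠ 0 := fun h => hsnd (hι (by rw [h, map_zero]))
      set a0 : K := (E.symm v).1 * (ι (E.symm v).2)⁻¹ with ha0
      have hva0 : v ∈ W' a0 := (hmemW' a0 v).2 (by
        rw [ha0]
        rw [inv_mul_cancel_right₀ hιv])
      refine ⟨W' a0, ⟨(hmemP _).2 (Or.inr ⟨a0, rfl⟩), hva0⟩, ?_⟩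
      rintro U ⟨hU, hvU⟩
      rcases (hmemP U).1 hU with h | ⟨b, hb⟩
      · exfalso
        subst h
        exact hsnd ((hmemS0' v).1 hvU)
      · subst hb
        have h1 := (hmemW' b v).1 hvU
        have h2 := (hmemW' a0 v).1 hva0
        have : b = a0 := mul_right_cancel₀ hιv (h1.symm.trans h2)
        rw [this]
  · -- dims
    intro U hU
    rcases (hmemP U).1 (by exact_mod_cast hU) with h | ⟨a, ha⟩
    · subst h; right; rw [hrkS0']
    · subst ha; left; exact hrkW' a
  · -- count of dim-d components
    show ((insert S0' (Finset.image W' Finset.univ)).filter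
      (fun (U : Submodule F (Fin n → F)) => Module.finrank F U = d)).card = q ^ (n - d)
    rw [Finset.filter_insert, if_neg (by rw [hrkS0']; omega)]
    rw [Finset.filter_true_of_mem (fun U hU => by
      obtain ⟨a, -, ha⟩ := Finset.mem_image.1 hU
      rw [← ha]; exact hrkW' a)]
    rw [Finset.card_image_of_injective _ hWinj, Finset.card_univ, hcard]
  · -- count of dim-(n-d) components
    show ((insert S0' (Finset.image W' Finset.univ)).filter
      (fun (U : Submodule F (Fin n → F)) => Module.finrank F U = n - d)).card = 1
    rw [Finset.filter_insert, if_pos (by rw [hrkS0'])]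
    rw [Finset.filter_false_of_mem (fun U hU => by
      obtain ⟨a, -, ha⟩ := Finset.mem_image.1 hU
      rw [← ha, hrkW' a]
      omega)]
    simp
end
end

section
/- In any non-trivial partition P of V_n(q), if some component has the minimum dimension among all components and there exist components of strictly larger dimension, then the number s of components of minimum dimension t is a positive multiple of q when counted as follows: the number of minimum-dimension components disjoint from the dual (complementary) subspace W of a fixed minimum-dimension component V_1 is a nonzero multiple of q; in particular s ≥ q. -/
open scoped Classical

theorem stmt7 (q n t : ℕ) (F : Type) [Field F] [Fintype F]
    (hq : Fintype.card F = q) (hn : 1 < n) (ht : t < n)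
    (P : Finset (Submodule F (Fin n → F)))
    (hP : IsVPartition (↑P : Set (Submodule F (Fin n → F))))
    (hr : 2 ≤ P.card)
    (V1 : Submodule F (Fin n → F)) (hV1 : V1 ∈ P)
    (hV1t : Module.finrank F V1 = t)
    (hmin : ∀ Vi ∈ P, t ≤ Module.finrank F Vi)
    (hbig : ∃ Vj ∈ P, t < Module.finrank F Vj)
    (W : Submodule F (Fin n → F)) (hW : IsCompl V1 W) :
    q ∣ (P.filter (fun (Vi : Submodule F (Fin n → F)) => Module.finrank F Vi = t ∧ Vi ⊓ W = ⊥)).card ∧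
    (P.filter (fun (Vi : Submodule F (Fin n → F)) => Module.finrank F Vi = t ∧ Vi ⊓ W = ⊥)).card ≠ 0 ∧
    q ≤ (P.filter (fun (Vi : Submodule F (Fin n → F)) => Module.finrank F Vi = t)).card := by
  classical
  subst hq
  set q := Fintype.card F with hq
  have hq2 : 2 ≤ q := Fintype.one_lt_card
  have hV : Module.finrank F (Fin n → F) = n := by
    simp [Module.finrank_pi]
  have hWd : Module.finrank F W = n - t := by
    have h := Submodule.finrank_add_eq_of_isCompl hW
    rw [hV1t, hV] at h
    omega
  -- components disjoint from W have dimension exactly t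
  have hdimt : ∀ Vi ∈ P, Vi ⊓ W = ⊥ → Module.finrank F Vi = t := by
    intro Vi hVi hdisj
    have h1 := Submodule.finrank_sup_add_finrank_inf_eq Vi W
    rw [hdisj, finrank_bot, hWd] at h1
    have h2 : Module.finrank F ↥(Vi ⊔ W) ≤ n := (Submodule.finrank_le (Vi ⊔ W)).trans_eq hV
    have h3 := hmin Vi hVi
    omega
  have hfilter_eq : P.filter (fun Vi : Submodule F (Fin n → F) => Module.finrank F Vi = t ∧ Vi ⊓ W = ⊥)
      = P.filter (fun Vi : Submodule F (Fin n → F) => Vi ⊓ W = ⊥) :=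
    Finset.filter_congr (fun Vi hVi => ⟨fun h => h.2, fun h => ⟨hdimt Vi hVi h, h⟩⟩)
  -- cardinality of each component minus its intersection with W
  have hcardVi : ∀ Vi : Submodule F (Fin n → F),
      (Finset.univ.filter (fun v => v ∈ Vi ∧ v ∉ W)).card
        = q ^ Module.finrank F Vi - q ^ Module.finrank F ↥(Vi ⊓ W) := by
    intro Vi
    have c1 : (Finset.univ.filter (fun v => v ∈ Vi)).card = q ^ Module.finrank F Vi := by
      rw [← Fintype.card_subtype, Module.card_eq_pow_finrank (K := F)]
    have c2a : (Finset.univ.filter (fun v => v ∈ Vi ∧ v ∈ W))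
        = (Finset.univ.filter (fun v => v ∈ Vi ⊓ W)) := by
      ext v; simp [Submodule.mem_inf]
    have c2 : (Finset.univ.filter (fun v => v ∈ Vi ∧ v ∈ W)).card
        = q ^ Module.finrank F ↥(Vi ⊓ W) := by
      rw [c2a, ← Fintype.card_subtype, Module.card_eq_pow_finrank (K := F)]
    have hsplit : ((Finset.univ.filter (fun v => v ∈ Vi)).filter (fun v => v ∈ W)).card
        + ((Finset.univ.filter (fun v => v ∈ Vi)).filter (fun v => ¬ v ∈ W)).card
        = (Finset.univ.filter (fun v => v ∈ Vi)).card :=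
      Finset.card_filter_add_card_filter_not (fun v => v ∈ W)
    rw [Finset.filter_filter, Finset.filter_filter] at hsplit
    rw [c1] at hsplit
    rw [c2] at hsplit
    omega
  have hineq : ∀ Vi : Submodule F (Fin n → F),
      q ^ Module.finrank F ↥(Vi ⊓ W) ≤ q ^ Module.finrank F Vi :=
    fun Vi => Nat.pow_le_pow_right (by omega) (Submodule.finrank_mono inf_le_left)
  -- the big count
  have hbiUnion : P.biUnion (fun Vi => Finset.univ.filter (fun v => v ∈ Vi ∧ v ∉ W))
      = Finset.univ.filter (fun v => (v : Fin n → F) ∉ W) := by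
    ext v
    simp only [Finset.mem_biUnion, Finset.mem_filter, Finset.mem_univ, true_and]
    constructor
    · rintro ⟨Vi, _, _, hvW⟩; exact hvW
    · intro hvW
      have hv0 : v ≠ 0 := fun h => hvW (h ▸ W.zero_mem)
      obtain ⟨Vi, ⟨hVi, hv⟩, -⟩ := hP.2 v hv0
      exact ⟨Vi, hVi, hv, hvW⟩
  have hdisjoint : ∀ Vi ∈ P, ∀ Vj ∈ P, Vi ≠ Vj →
      Disjoint (Finset.univ.filter (fun v => v ∈ Vi ∧ v ∉ W))
        (Finset.univ.filter (fun v => v ∈ Vj ∧ v ∉ W)) := by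
    intro Vi hVi Vj hVj hne
    rw [Finset.disjoint_left]
    intro v hvi hvj
    simp only [Finset.mem_filter, Finset.mem_univ, true_and] at hvi hvj
    have hv0 : v ≠ 0 := fun h => hvi.2 (h ▸ W.zero_mem)
    obtain ⟨U, -, hU⟩ := hP.2 v hv0
    exact hne ((hU Vi ⟨hVi, hvi.1⟩).trans (hU Vj ⟨hVj, hvj.1⟩).symm)
  have hsum : ∑ Vi ∈ P, (Finset.univ.filter (fun v => v ∈ Vi ∧ v ∉ W)).card
      = q ^ n - q ^ (n - t) := by
    rw [← Finset.card_biUnion hdisjoint, hbiUnion]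
    have cW : (Finset.univ.filter (fun v => (v : Fin n → F) ∈ W)).card = q ^ (n - t) := by
      rw [← Fintype.card_subtype, Module.card_eq_pow_finrank (K := F), hWd]
    have cV : (Finset.univ : Finset (Fin n → F)).card = q ^ n := by
      rw [Finset.card_univ, Module.card_eq_pow_finrank (K := F), hV]
    have hsplit : (Finset.univ.filter (fun v => (v : Fin n → F) ∈ W)).card
        + (Finset.univ.filter (fun v => (v : Fin n → F) ∉ W)).card
        = (Finset.univ : Finset (Fin n → F)).card :=
      Finset.card_filter_add_card_filter_not (fun v => v ∈ W)
    omega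
  -- key equation without subtraction
  have key : (∑ Vi ∈ P, q ^ Module.finrank F ↥(Vi ⊓ W)) + (q ^ n - q ^ (n - t))
      = ∑ Vi ∈ P, q ^ Module.finrank F ↥Vi := by
    calc (∑ Vi ∈ P, q ^ Module.finrank F ↥(Vi ⊓ W)) + (q ^ n - q ^ (n - t))
        = ∑ Vi ∈ P, (q ^ Module.finrank F ↥(Vi ⊓ W)
            + (Finset.univ.filter (fun v => v ∈ Vi ∧ v ∉ W)).card) := by
          rw [Finset.sum_add_distrib, hsum]
      _ = ∑ Vi ∈ P, q ^ Module.finrank F ↥Vi :=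
          Finset.sum_congr rfl (fun Vi _ => by
            rw [hcardVi Vi]
            have := hineq Vi
            omega)
  haveI : NeZero q := ⟨by omega⟩
  have hcast : ∀ d : ℕ, 1 ≤ d → ((q ^ d : ℕ) : ZMod q) = 0 := by
    intro d hd
    push_cast
    rw [ZMod.natCast_self, zero_pow (by omega)]
  have hrank1 : ∀ Vi ∈ P, 1 ≤ Module.finrank F Vi := by
    intro Vi hVi
    have hne := hP.1 Vi hVi
    have h0 : Module.finrank F ↥Vi ≠ 0 := fun h => hne (Submodule.finrank_eq_zero.mp h)
    omega
  have hs0 : ((∑ Vi ∈ P, q ^ Module.finrank F ↥(Vi ⊓ W) : ℕ) : ZMod q)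
      = ((P.filter (fun Vi : Submodule F (Fin n → F) => Vi ⊓ W = ⊥)).card : ZMod q) := by
    rw [Nat.cast_sum, Finset.card_filter, Nat.cast_sum]
    apply Finset.sum_congr rfl
    intro Vi _
    by_cases h : Vi ⊓ W = ⊥
    · rw [if_pos h, h]; simp
    · rw [if_neg h]
      have he : Module.finrank F ↥(Vi ⊓ W) ≠ 0 := fun h0 => h (Submodule.finrank_eq_zero.mp h0)
      rw [hcast _ (by omega)]
      simp
  have e1 : ((q ^ n - q ^ (n - t) : ℕ) : ZMod q) = 0 := by
    rw [Nat.cast_sub (Nat.pow_le_pow_right (by omega) (by omega)),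
      hcast n (by omega), hcast (n - t) (by omega), sub_zero]
  have e2 : ((∑ Vi ∈ P, q ^ Module.finrank F ↥Vi : ℕ) : ZMod q) = 0 := by
    rw [Nat.cast_sum]
    exact Finset.sum_eq_zero (fun Vi hVi => hcast _ (hrank1 Vi hVi))
  have hfinal : ((P.filter (fun Vi : Submodule F (Fin n → F) => Vi ⊓ W = ⊥)).card : ZMod q) = 0 := by
    have hck : ((∑ Vi ∈ P, q ^ Module.finrank F ↥(Vi ⊓ W) : ℕ) : ZMod q)
        + ((q ^ n - q ^ (n - t) : ℕ) : ZMod q)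
        = ((∑ Vi ∈ P, q ^ Module.finrank F ↥Vi : ℕ) : ZMod q) := by
      rw [← Nat.cast_add, key]
    rw [hs0, e1, e2, add_zero] at hck
    exact hck
  have hdvd : q ∣ (P.filter (fun Vi : Submodule F (Fin n → F) => Vi ⊓ W = ⊥)).card :=
    (ZMod.natCast_eq_zero_iff _ _).mp hfinal
  have hmem : V1 ∈ P.filter (fun Vi : Submodule F (Fin n → F) => Vi ⊓ W = ⊥) :=
    Finset.mem_filter.mpr ⟨hV1, disjoint_iff.mp hW.disjoint⟩
  have hpos : (P.filter (fun Vi : Submodule F (Fin n → F) => Vi ⊓ W = ⊥)).card ≠ 0 :=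
    Finset.card_ne_zero_of_mem hmem
  have hqle : q ≤ (P.filter (fun Vi : Submodule F (Fin n → F) => Vi ⊓ W = ⊥)).card :=
    Nat.le_of_dvd (Nat.pos_of_ne_zero hpos) hdvd
  have hsub : P.filter (fun Vi : Submodule F (Fin n → F) => Module.finrank F ↥Vi = t ∧ Vi ⊓ W = ⊥)
      ⊆ P.filter (fun Vi : Submodule F (Fin n → F) => Module.finrank F ↥Vi = t) := by
    intro x hx
    simp only [Finset.mem_filter] at hx ⊢
    exact ⟨hx.1, hx.2.1⟩
  refine ⟨?_, ?_, ?_⟩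
  · rw [hfilter_eq]; exact hdvd
  · rw [hfilter_eq]; exact hpos
  · calc q ≤ (P.filter (fun Vi : Submodule F (Fin n → F) => Vi ⊓ W = ⊥)).card := hqle
      _ = (P.filter (fun Vi : Submodule F (Fin n → F) => Module.finrank F ↥Vi = t ∧ Vi ⊓ W = ⊥)).card := by rw [hfilter_eq]
      _ ≤ _ := Finset.card_le_card hsub
end

section
/- Let P be a non-trivial partition of V_n(q) and let t be the minimum dimension occurring among the components of P. Then the number of components of P of dimension t is at least q + 1. (Lemma 3.2 with α = 1.) -/
open scoped Classical

section Aux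

variable {F : Type} [Field F] [Fintype F] {n : ℕ}

set_option linter.unusedSectionVars false

private lemma card_mem_filter (C : Submodule F (Fin n → F)) :
    (Finset.univ.filter (fun v => v ∈ C)).card = Fintype.card F ^ Module.finrank F C := by
  rw [← Fintype.card_subtype]
  exact Module.card_eq_pow_finrank (K := F) (V := C)

private lemma finrank_ker_eq (f : (Fin n → F) →ₗ[F] F) (hf : f ≠ 0) :
    Module.finrank F (LinearMap.ker f) + 1 = n := by
  have h := LinearMap.finrank_range_add_finrank_ker f
  have hr : Module.finrank F (LinearMap.range f) = 1 := by
    have hne : LinearMap.range f ≠ ⊥ := by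
      rw [Ne, LinearMap.range_eq_bot]; exact hf
    have h1 : Module.finrank F (LinearMap.range f) ≤ 1 := by
      simpa [Module.finrank_self] using Submodule.finrank_le (LinearMap.range f)
    have h2 : Module.finrank F (LinearMap.range f) ≠ 0 := by
      rw [Ne, Submodule.finrank_eq_zero]; exact hne
    omega
  rw [hr] at h
  have hn : Module.finrank F (Fin n → F) = n := by
    simp [Module.finrank_pi]
  omega

private lemma finrank_inf_eq (f : (Fin n → F) →ₗ[F] F) (hf : f ≠ 0)
    (C : Submodule F (Fin n → F)) (hC : ¬ C ≤ LinearMap.ker f) :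
    Module.finrank F (C ⊓ LinearMap.ker f : Submodule F (Fin n → F)) + 1
      = Module.finrank F C := by
  have heq := Submodule.finrank_sup_add_finrank_inf_eq C (LinearMap.ker f)
  have hker := finrank_ker_eq f hf
  have hlt : LinearMap.ker f < C ⊔ LinearMap.ker f := by
    refine lt_of_le_of_ne le_sup_right (fun h => hC ?_)
    exact le_trans le_sup_left (le_of_eq h.symm)
  have h1 := Submodule.finrank_lt_finrank_of_lt hlt
  have h2 : Module.finrank F (C ⊔ LinearMap.ker f : Submodule F (Fin n → F)) ≤ n := by
    have := Submodule.finrank_le (C ⊔ LinearMap.ker f)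
    simpa [Module.finrank_pi] using this
  omega

/-- number of nonzero vectors of `C` off `ker f`, when `C ⊄ ker f`. -/
private lemma card_off_ker (f : (Fin n → F) →ₗ[F] F) (hf : f ≠ 0)
    (C : Submodule F (Fin n → F)) (hC : ¬ C ≤ LinearMap.ker f) :
    (Finset.univ.filter (fun v => v ∈ C ∧ f v ≠ 0)).card
      = Fintype.card F ^ (Module.finrank F C - 1) * (Fintype.card F - 1) := by
  have hsplit := Finset.card_filter_add_card_filter_not
    (s := Finset.univ.filter (fun v => v ∈ C)) (p := fun v => f v ≠ 0)
  rw [Finset.filter_filter, Finset.filter_filter, card_mem_filter] at hsplit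
  have hker : (Finset.univ.filter fun v => v ∈ C ∧ ¬ f v ≠ 0)
      = Finset.univ.filter (fun v => v ∈ (C ⊓ LinearMap.ker f : Submodule F (Fin n → F))) := by
    apply Finset.filter_congr
    intro v _
    simp [Submodule.mem_inf, LinearMap.mem_ker]
  rw [hker, card_mem_filter] at hsplit
  have hrk := finrank_inf_eq f hf C hC
  set e := Module.finrank F (C ⊓ LinearMap.ker f : Submodule F (Fin n → F)) with he
  rw [← hrk]
  have hq : Fintype.card F ^ (e + 1) = Fintype.card F ^ e * Fintype.card F := by ring
  rw [← hrk, hq] at hsplit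
  have : e + 1 - 1 = e := rfl
  rw [this, Nat.mul_sub_one]
  omega

private lemma card_off_ker_total (f : (Fin n → F) →ₗ[F] F) (hf : f ≠ 0) :
    (Finset.univ.filter (fun v => f v ≠ 0)).card
      = Fintype.card F ^ (n - 1) * (Fintype.card F - 1) := by
  have hsplit := Finset.card_filter_add_card_filter_not
    (s := (Finset.univ : Finset (Fin n → F))) (p := fun v => f v ≠ 0)
  have hker : (Finset.univ.filter fun v => ¬ f v ≠ 0)
      = Finset.univ.filter (fun v => v ∈ LinearMap.ker f) := by
    apply Finset.filter_congr
    intro v _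
    simp [LinearMap.mem_ker]
  rw [hker, card_mem_filter] at hsplit
  have hrk := finrank_ker_eq f hf
  set e := Module.finrank F (LinearMap.ker f) with he
  have hcardV : Fintype.card (Fin n → F) = Fintype.card F ^ n := by
    simp [Fintype.card_fun]
  rw [Finset.card_univ, hcardV] at hsplit
  have hqn : Fintype.card F ^ n = Fintype.card F ^ e * Fintype.card F := by
    rw [← hrk]; ring
  rw [hqn] at hsplit
  have hn1 : n - 1 = e := by omega
  rw [hn1, Nat.mul_sub_one]
  omega

end Aux

section Key

variable {F : Type} [Field F] [Fintype F] {n t : ℕ}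

set_option linter.unusedSectionVars false

private lemma comp_spec (P : Finset (Submodule F (Fin n → F)))
    (hP : IsVPartition (↑P : Set (Submodule F (Fin n → F))))
    {v : Fin n → F} (hv : v ≠ 0) :
    ∃ C : Submodule F (Fin n → F), (C ∈ P ∧ v ∈ C) ∧
      ∀ C' ∈ P, v ∈ C' → C' = C := by
  obtain ⟨C, hC, hun⟩ := hP.2 v hv
  exact ⟨C, hC, fun C' h1 h2 => hun C' ⟨h1, h2⟩⟩

private lemma key_dvd (P : Finset (Submodule F (Fin n → F)))
    (hP : IsVPartition (↑P : Set (Submodule F (Fin n → F))))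
    (hmin : ∀ Vi ∈ P, t ≤ Module.finrank F Vi)
    (ht1 : 1 ≤ t) (htn : t + 1 ≤ n)
    (f : (Fin n → F) →ₗ[F] F) (hf : f ≠ 0) :
    Fintype.card F ∣
      (P.filter (fun C : Submodule F (Fin n → F) =>
        Module.finrank F C = t ∧ ¬ C ≤ LinearMap.ker f)).card := by
  set q := Fintype.card F with hqdef
  have hq2 : 2 ≤ q := Fintype.one_lt_card
  -- the component map
  choose comp hcomp using fun (v : Fin n → F) (hv : v ≠ 0) => comp_spec P hP hv
  classical
  set g : (Fin n → F) → Submodule F (Fin n → F) :=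
    fun v => if hv : v = 0 then ⊥ else comp v hv with hg
  have hgP : ∀ v : Fin n → F, v ≠ 0 → g v ∈ P ∧ v ∈ g v := by
    intro v hv
    rw [hg]; simp only [dif_neg hv]
    exact (hcomp v hv).1
  have hgu : ∀ (v : Fin n → F) (hv : v ≠ 0), ∀ C ∈ P, v ∈ C → C = g v := by
    intro v hv C hC hvC
    rw [hg]; simp only [dif_neg hv]
    exact (hcomp v hv).2 C hC hvC
  set A : Finset (Fin n → F) := Finset.univ.filter (fun v => f v ≠ 0) with hA
  have hvne : ∀ v ∈ A, v ≠ 0 := by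
    intro v hv h0
    rw [hA, Finset.mem_filter] at hv
    exact hv.2 (by rw [h0]; simp)
  -- fiberwise count
  have hfib : A.card = ∑ C ∈ P, (A.filter (fun v => g v = C)).card :=
    Finset.card_eq_sum_card_fiberwise (fun v hv => (hgP v (hvne v hv)).1)
  have hfiber_eq : ∀ C ∈ P, A.filter (fun v => g v = C)
      = Finset.univ.filter (fun v => v ∈ C ∧ f v ≠ 0) := by
    intro C hC
    ext v
    rw [hA, Finset.mem_filter, Finset.mem_filter, Finset.mem_filter]
    simp only [Finset.mem_univ, true_and]
    constructor
    · rintro ⟨hfv, hgv⟩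
      have hv : v ≠ 0 := fun h0 => hfv (by rw [h0]; simp)
      exact ⟨hgv ▸ (hgP v hv).2, hfv⟩
    · rintro ⟨hvC, hfv⟩
      have hv : v ≠ 0 := fun h0 => hfv (by rw [h0]; simp)
      exact ⟨hfv, (hgu v hv C hC hvC).symm⟩
  rw [Finset.sum_congr rfl (fun C hC => by rw [hfiber_eq C hC])] at hfib
  rw [card_off_ker_total f hf] at hfib
  -- split the sum according to the condition
  set cond : Submodule F (Fin n → F) → Prop :=
    fun C => Module.finrank F C = t ∧ ¬ C ≤ LinearMap.ker f with hcond
  rw [← Finset.sum_filter_add_sum_filter_not P cond] at hfib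
  -- the tail part
  have htail : ∑ C ∈ P.filter cond,
      (Finset.univ.filter (fun v => v ∈ C ∧ f v ≠ 0)).card
      = (P.filter cond).card * (q ^ (t - 1) * (q - 1)) := by
    have hcc : ∀ C ∈ P.filter cond,
        (Finset.univ.filter (fun v => v ∈ C ∧ f v ≠ 0)).card = q ^ (t - 1) * (q - 1) := by
      intro C hC
      rw [Finset.mem_filter] at hC
      rw [card_off_ker f hf C hC.2.2, hC.2.1]
    rw [Finset.sum_congr rfl hcc, Finset.sum_const, smul_eq_mul]
  -- the rest is divisible by q^t * (q-1)
  have hrest : q ^ t * (q - 1) ∣ ∑ C ∈ P.filter (fun C => ¬ cond C),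
      (Finset.univ.filter (fun v => v ∈ C ∧ f v ≠ 0)).card := by
    apply Finset.dvd_sum
    intro C hC
    rw [Finset.mem_filter] at hC
    by_cases hle : C ≤ LinearMap.ker f
    · have : (Finset.univ.filter (fun v => v ∈ C ∧ f v ≠ 0)) = ∅ := by
        apply Finset.filter_false_of_mem
        rintro v _ ⟨hvC, hfv⟩
        exact hfv (hle hvC)
      rw [this]; simp
    · have hne : Module.finrank F C ≠ t := by
        intro h
        rw [hcond] at hC
        exact hC.2 ⟨h, hle⟩
      have hge : t + 1 ≤ Module.finrank F C := by
        have := hmin C hC.1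
        omega
      rw [card_off_ker f hf C hle]
      exact Nat.mul_dvd_mul (pow_dvd_pow q (by omega)) dvd_rfl
  -- conclude divisibility
  obtain ⟨k, hk⟩ := hrest
  have hdvdtot : q ^ t * (q - 1) ∣ q ^ (n - 1) * (q - 1) :=
    Nat.mul_dvd_mul (pow_dvd_pow q (by omega)) dvd_rfl
  obtain ⟨m, hm⟩ := hdvdtot
  rw [htail, hk, hm] at hfib
  -- now : q^t*(q-1)*m = card * (q^(t-1)*(q-1)) + q^t*(q-1)*k
  have hqt : q ^ t = q ^ (t - 1) * q := by
    rw [← pow_succ]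
    congr 1
    omega
  rw [hqt] at hfib
  set X := q ^ (t - 1) * (q - 1) with hXdef
  have hX : 0 < X := by
    have h1 : 0 < q ^ (t - 1) := pow_pos (by omega) _
    have h2 : 0 < q - 1 := by omega
    exact Nat.mul_pos h1 h2
  set c := (P.filter cond).card with hcdef
  have hfib' : X * (q * m) = X * (c + q * k) := by
    calc X * (q * m) = q ^ (t - 1) * q * (q - 1) * m := by rw [hXdef]; ring
    _ = c * X + q ^ (t - 1) * q * (q - 1) * k := hfib
    _ = X * (c + q * k) := by rw [hXdef]; ring
  have h2 : q * m = c + q * k := Nat.eq_of_mul_eq_mul_left hX hfib'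
  refine ⟨m - k, ?_⟩
  have h3 : q * (m - k) = q * m - q * k := Nat.mul_sub q m k
  rw [h3, h2, Nat.add_sub_cancel]

end Key

section Main

variable {F : Type} [Field F] [Fintype F] {n t : ℕ}

set_option linter.unusedSectionVars false

private lemma exists_functional (W : Submodule F (Fin n → F)) {v : Fin n → F} (hv : v ∉ W) :
    ∃ f : (Fin n → F) →ₗ[F] F, W ≤ LinearMap.ker f ∧ f v ≠ 0 := by
  have hvq : (Submodule.Quotient.mk v : (Fin n → F) ⧸ W) ≠ 0 := by
    simpa [Submodule.Quotient.mk_eq_zero] using hv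
  have hex : ∃ φ : Module.Dual F ((Fin n → F) ⧸ W), φ (Submodule.Quotient.mk v) ≠ 0 := by
    by_contra h
    push_neg at h
    exact hvq ((Module.forall_dual_apply_eq_zero_iff F _).1 h)
  obtain ⟨φ, hφ⟩ := hex
  refine ⟨φ.comp W.mkQ, ?_, ?_⟩
  · intro x hx
    rw [LinearMap.mem_ker, LinearMap.comp_apply]
    have hx0 : W.mkQ x = 0 := (Submodule.Quotient.mk_eq_zero W).2 hx
    rw [hx0, map_zero]
  · simpa [Submodule.mkQ_apply] using hφ

end Main

theorem stmt8 (q n t : ℕ) (F : Type) [Field F] [Fintype F]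
    (hq : Fintype.card F = q) (hn : 1 < n)
    (P : Finset (Submodule F (Fin n → F)))
    (hP : IsVPartition (↑P : Set (Submodule F (Fin n → F))))
    (hr : 2 ≤ P.card)
    (hmin : ∀ Vi ∈ P, t ≤ Module.finrank F Vi)
    (hex : ∃ Vi ∈ P, Module.finrank F Vi = t) :
    q + 1 ≤ (P.filter (fun (Vi : Submodule F (Fin n → F)) => Module.finrank F Vi = t)).card := by
  classical
  subst hq
  obtain ⟨W, hWP, hWt⟩ := hex
  have hWP' : W ∈ (↑P : Set (Submodule F (Fin n → F))) := Finset.mem_coe.2 hWP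
  have hWne : W ≠ ⊥ := hP.1 W hWP'
  have ht1 : 1 ≤ t := by
    by_contra h
    push_neg at h
    have h0 : Module.finrank F W = 0 := by omega
    exact hWne (Submodule.finrank_eq_zero.1 h0)
  -- a second component, to get t + 1 ≤ n
  obtain ⟨U, hUP, hUW⟩ := Finset.exists_mem_ne (by omega : 1 < P.card) W
  have hUP' : U ∈ (↑P : Set (Submodule F (Fin n → F))) := Finset.mem_coe.2 hUP
  have hinf : W ⊓ U = ⊥ := by
    rw [Submodule.eq_bot_iff]
    intro x hx
    by_contra hx0
    obtain ⟨D, _, hDu⟩ := hP.2 x hx0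
    have h1 := hDu W ⟨hWP', (Submodule.mem_inf.1 hx).1⟩
    have h2 := hDu U ⟨hUP', (Submodule.mem_inf.1 hx).2⟩
    exact hUW (h2.trans h1.symm)
  have hsum := Submodule.finrank_sup_add_finrank_inf_eq W U
  rw [hinf, finrank_bot] at hsum
  have hle : Module.finrank F (W ⊔ U : Submodule F (Fin n → F)) ≤ n := by
    simpa [Module.finrank_pi] using Submodule.finrank_le (W ⊔ U)
  have htU := hmin U hUP
  have htn : t + 1 ≤ n := by omega
  -- main contradiction
  by_contra hcon
  push_neg at hcon
  have htails : ∀ C ∈ P, Module.finrank F C = t → C = W := by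
    intro C hCP hCt
    have hCW : C ≤ W := by
      intro x hxC
      by_contra hxW
      obtain ⟨f, hfW, hfx⟩ := exists_functional W hxW
      have hf0 : f ≠ 0 := by
        intro h
        rw [h] at hfx
        exact hfx rfl
      have hdvd := key_dvd P hP hmin ht1 htn f hf0
      set S := P.filter (fun C : Submodule F (Fin n → F) =>
        Module.finrank F C = t ∧ ¬ C ≤ LinearMap.ker f) with hS
      have hCS : C ∈ S := by
        rw [hS, Finset.mem_filter]
        exact ⟨hCP, hCt, fun hle' => hfx (hle' hxC)⟩
      have hpos : 0 < S.card := Finset.card_pos.2 ⟨C, hCS⟩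
      have hsub : S ⊆ (P.filter (fun C : Submodule F (Fin n → F) =>
          Module.finrank F C = t)).erase W := by
        intro D hD
        rw [hS, Finset.mem_filter] at hD
        refine Finset.mem_erase.2 ⟨?_, Finset.mem_filter.2 ⟨hD.1, hD.2.1⟩⟩
        intro hDW
        exact hD.2.2 (hDW ▸ hfW)
      have hcard := Finset.card_le_card hsub
      rw [Finset.card_erase_of_mem (Finset.mem_filter.2 ⟨hWP, hWt⟩)] at hcard
      have hqS := Nat.le_of_dvd hpos hdvd
      omega
    obtain ⟨x, hxC, hx0⟩ := (Submodule.ne_bot_iff C).1 (hP.1 C (Finset.mem_coe.2 hCP))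
    obtain ⟨D, _, hDu⟩ := hP.2 x hx0
    exact (hDu C ⟨Finset.mem_coe.2 hCP, hxC⟩).trans (hDu W ⟨hWP', hCW hxC⟩).symm
  obtain ⟨w, hwW, hw0⟩ := (Submodule.ne_bot_iff W).1 hWne
  have hfex : ∃ f : (Fin n → F) →ₗ[F] F, f w ≠ 0 := by
    by_contra h
    push_neg at h
    exact hw0 ((Module.forall_dual_apply_eq_zero_iff F w).1 h)
  obtain ⟨f, hfw⟩ := hfex
  have hf0 : f ≠ 0 := by
    intro h
    rw [h] at hfw
    exact hfw rfl
  have hdvd := key_dvd P hP hmin ht1 htn f hf0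
  have hSeq : P.filter (fun C : Submodule F (Fin n → F) =>
      Module.finrank F C = t ∧ ¬ C ≤ LinearMap.ker f) = {W} := by
    apply Finset.eq_singleton_iff_unique_mem.2
    constructor
    · exact Finset.mem_filter.2 ⟨hWP, hWt, fun hle' => hfw (hle' hwW)⟩
    · intro D hD
      rw [Finset.mem_filter] at hD
      exact htails D hD.1 hD.2.1
  rw [hSeq, Finset.card_singleton] at hdvd
  have h1 := Nat.le_of_dvd one_pos hdvd
  have hq2 : 2 ≤ Fintype.card F := Fintype.one_lt_card
  omega
end

section
/- Let P be a non-trivial partition of V_n(q) with r components, and let t be the minimum dimension of a component. Then r ≡ 1 (mod q^t); in particular r ≥ q^t + 1. -/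
open scoped Classical

theorem stmt10 (q n t : ℕ) (F : Type) [Field F] [Fintype F]
    (hq : Fintype.card F = q) (hn : 1 < n)
    (P : Finset (Submodule F (Fin n → F)))
    (hP : IsVPartition (↑P : Set (Submodule F (Fin n → F))))
    (hr : 2 ≤ P.card)
    (hmin : ∀ Vi ∈ P, t ≤ Module.finrank F Vi)
    (hex : ∃ Vi ∈ P, Module.finrank F Vi = t) :
    P.card % q ^ t = 1 ∧ q ^ t + 1 ≤ P.card := by
  classical
  have hq2 : 2 ≤ q := hq ▸ Fintype.one_lt_card
  -- t ≥ 1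
  obtain ⟨W0, hW0P, hW0t⟩ := hex
  have hW0ne : W0 ≠ ⊥ := hP.1 W0 hW0P
  have ht1 : 1 ≤ t := by
    rcases Nat.eq_zero_or_pos t with h0 | h; swap; · exact h
    exfalso
    apply hW0ne
    rw [← Submodule.finrank_eq_zero (R := F) (M := Fin n → F)]
    omega
  -- t ≤ n
  have htn : t ≤ n := by
    have := Submodule.finrank_le W0
    simpa [Module.finrank_fin_fun, hW0t] using this
  -- the choice function
  have key : ∀ v : Fin n → F, v ≠ 0 → ∃! W : Submodule F (Fin n → F), W ∈ P ∧ v ∈ W := by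
    intro v hv
    simpa using hP.2 v hv
  let f : (Fin n → F) → Submodule F (Fin n → F) := fun v =>
    if h : v ≠ 0 then (key v h).choose else ⊥
  have hf1 : ∀ v (h : v ≠ 0), f v ∈ P ∧ v ∈ f v := by
    intro v h
    simpa [f, h] using (key v h).choose_spec.1
  have hf2 : ∀ v (h : v ≠ 0) (W : Submodule F (Fin n → F)), W ∈ P → v ∈ W → f v = W := by
    intro v h W hWP hvW
    have h1 := (key v h).choose_spec.2 W ⟨hWP, hvW⟩
    simp only [f, dif_pos h]
    exact h1.symm
  -- counting
  let S : Finset (Fin n → F) := Finset.univ.filter (fun v => v ≠ 0)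
  have hScard : S.card = q ^ n - 1 := by
    have : S = Finset.univ \ {0} := by
      ext v; simp [S]
    rw [this, Finset.card_sdiff_of_subset (by simp)]
    simp [Fintype.card_fun, hq]
  have hmem : ∀ v ∈ S, f v ∈ P := by
    intro v hv
    have hv0 : v ≠ 0 := by simpa [S] using hv
    exact (hf1 v hv0).1
  have hsum := Finset.card_eq_sum_card_fiberwise hmem
  have hfiber : ∀ W ∈ P, (S.filter fun v => f v = W).card = q ^ (Module.finrank F W) - 1 := by
    intro W hWP
    have hset : (S.filter fun v => f v = W) = Finset.univ.filter (fun v => v ∈ W ∧ v ≠ 0) := by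
      ext v
      simp only [Finset.mem_filter, Finset.mem_univ, true_and, S]
      constructor
      · rintro ⟨hv0, hfv⟩
        exact ⟨hfv ▸ (hf1 v hv0).2, hv0⟩
      · rintro ⟨hvW, hv0⟩
        exact ⟨hv0, hf2 v hv0 W hWP hvW⟩
    rw [hset]
    have hWcard : Fintype.card W = q ^ (Module.finrank F W) := by
      rw [Module.card_eq_pow_finrank (K := F) (V := W), hq]
    have hsplit : Finset.univ.filter (fun v => v ∈ W ∧ v ≠ 0)
        = (Finset.univ.filter (fun v => v ∈ W)) \ {0} := by
      ext v; simp
    have hsub : ({0} : Finset (Fin n → F)) ⊆ Finset.univ.filter (fun v => v ∈ W) := by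
      simp [W.zero_mem]
    have hWc : (Finset.univ.filter (fun v => v ∈ W)).card = Fintype.card W :=
      (Fintype.card_subtype _).symm
    rw [hsplit, Finset.card_sdiff_of_subset hsub, hWc, hWcard]
    simp
  rw [Finset.sum_congr rfl hfiber, hScard] at hsum
  -- hsum : q ^ n - 1 = ∑ W ∈ P, (q ^ finrank W - 1)
  have hterm : ∀ W ∈ P, 1 ≤ q ^ (Module.finrank F W) := fun W _ => Nat.one_le_pow _ _ (by omega)
  have hmain : q ^ n + P.card = (∑ W ∈ P, q ^ (Module.finrank F W)) + 1 := by
    have h1 : ∑ W ∈ P, (q ^ (Module.finrank F W) - 1) + P.card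
        = ∑ W ∈ P, q ^ (Module.finrank F W) := by
      have : ∑ W ∈ P, (q ^ (Module.finrank F W) - 1) + P.card
          = ∑ W ∈ P, ((q ^ (Module.finrank F W) - 1) + 1) := by
        rw [Finset.sum_add_distrib, Finset.sum_const, smul_eq_mul, mul_one]
      rw [this]
      exact Finset.sum_congr rfl fun W hW => by have := hterm W hW; omega
    have hqn : 1 ≤ q ^ n := Nat.one_le_pow _ _ (by omega)
    omega
  -- mod q^t
  have hdvd : ∀ W ∈ P, q ^ t ∣ q ^ (Module.finrank F W) :=
    fun W hW => pow_dvd_pow q (hmin W hW)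
  have hdvdsum : q ^ t ∣ ∑ W ∈ P, q ^ (Module.finrank F W) := Finset.dvd_sum hdvd
  have hdvdn : q ^ t ∣ q ^ n := pow_dvd_pow q htn
  have hqt2 : 2 ≤ q ^ t := le_trans hq2 (Nat.le_self_pow (by omega) q)
  have hmod : P.card % q ^ t = 1 := by
    obtain ⟨a, ha⟩ := hdvdsum
    obtain ⟨b, hb⟩ := hdvdn
    have h2 : (q ^ t * b + P.card) % q ^ t = (q ^ t * a + 1) % q ^ t := by
      rw [← ha, ← hb, hmain]
    rw [Nat.mul_add_mod, Nat.mul_add_mod] at h2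
    rw [h2, Nat.mod_eq_of_lt (show 1 < q ^ t from hqt2)]
  refine ⟨hmod, ?_⟩
  have hd := Nat.div_add_mod P.card (q ^ t)
  rw [hmod] at hd
  rcases Nat.eq_zero_or_pos (P.card / q ^ t) with h0 | h
  · rw [h0, Nat.mul_zero] at hd; omega
  · have := Nat.le_mul_of_pos_right (q ^ t) h
    omega
end

section
/- Let T = {n_1, ..., n_k} with n_1 < ... < n_k < n, n = n_k + n_{k-1}, 2 n_k > n, and n_1 = 1. Then V_n(q) admits a T-partition. -/
open scoped Classical

open Polynomial in
lemma galois_dvd_aux (p a k : ℕ) (hp : 0 < p) :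
    (X ^ p ^ a - X : (ZMod p)[X]) ∣ X ^ p ^ (a * k) - X := by
  have hu : 1 ≤ p ^ a := Nat.one_le_pow _ _ hp
  obtain ⟨m, hm⟩ : ∃ m, p ^ a = m + 1 := ⟨p ^ a - 1, by omega⟩
  have hv1 : 1 ≤ p ^ (a * k) := Nat.one_le_pow _ _ hp
  obtain ⟨M, hM⟩ : ∃ M, p ^ (a * k) = M + 1 := ⟨p ^ (a * k) - 1, by omega⟩
  obtain ⟨c, hc⟩ : (m : ℕ) ∣ M := by
    have h := Nat.sub_dvd_pow_sub_pow (p ^ a) 1 k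
    rw [one_pow, ← pow_mul] at h
    have e1 : p ^ a - 1 = m := by omega
    have e2 : p ^ (a * k) - 1 = M := by omega
    rwa [e1, e2] at h
  have h1 : (X ^ p ^ a - X : (ZMod p)[X]) = X * (X ^ m - 1) := by
    rw [hm]; ring
  have h2 : (X ^ p ^ (a * k) - X : (ZMod p)[X]) = X * (X ^ M - 1) := by
    rw [hM]; ring
  rw [h1, h2]
  refine mul_dvd_mul_left _ ?_
  have : (X ^ m - 1 : (ZMod p)[X]) ∣ (X ^ m) ^ c - 1 ^ c := sub_dvd_pow_sub_pow _ _ _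
  rwa [one_pow, ← pow_mul, ← hc] at this

open Polynomial in
lemma exists_finite_field_ext (F : Type) [Field F] [Fintype F] (m : ℕ) (hm : m ≠ 0) :
    ∃ (E : Type) (_ : Field E) (_ : F →+* E),
      Finite E ∧ Nat.card E = Fintype.card F ^ m := by
  obtain ⟨p, hc⟩ := CharP.exists F
  obtain ⟨s, hp, hcard⟩ := @FiniteField.card F _ _ p hc
  haveI : Fact p.Prime := ⟨hp⟩
  letI : Algebra (ZMod p) F := ZMod.algebra _ _
  refine ⟨GaloisField p (s * m), inferInstance, ?_, inferInstance, ?_⟩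
  · have e1 : F ≃ₐ[ZMod p] GaloisField p s :=
      GaloisField.algEquivGaloisFieldOfFintype p s hcard
    have hdvd : (X ^ p ^ (s : ℕ) - X : (ZMod p)[X]) ∣ X ^ p ^ ((s : ℕ) * m) - X :=
      galois_dvd_aux p s m hp.pos
    have hne : (X ^ p ^ ((s : ℕ) * m) - X : (ZMod p)[X]) ≠ 0 :=
      FiniteField.X_pow_card_pow_sub_X_ne_zero _ (by positivity) hp.one_lt
    have hsp : Splits ((X ^ p ^ ((s : ℕ) * m) - X : (ZMod p)[X]).map
        (algebraMap (ZMod p) (GaloisField p ((s : ℕ) * m)))) :=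
      SplittingField.splits (X ^ p ^ ((s : ℕ) * m) - X : (ZMod p)[X])
    have hsp2 : Splits ((X ^ p ^ (s : ℕ) - X : (ZMod p)[X]).map
        (algebraMap (ZMod p) (GaloisField p ((s : ℕ) * m)))) :=
      hsp.of_dvd (Polynomial.map_ne_zero hne) (Polynomial.map_dvd _ hdvd)
    exact ((SplittingField.lift (X ^ p ^ (s : ℕ) - X : (ZMod p)[X]) hsp2).comp
      e1.toAlgHom).toRingHom
  · rw [GaloisField.card p _ (by positivity), hcard, ← pow_mul]

lemma vpartition_transport {F V V' : Type*} [Field F] [AddCommGroup V] [Module F V]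
    [AddCommGroup V'] [Module F V'] (e : V ≃ₗ[F] V') (P : Set (Submodule F V))
    (h : IsVPartition P) :
    IsVPartition ((fun W => W.map (e : V →ₗ[F] V')) '' P) ∧
      DimSet ((fun W => W.map (e : V →ₗ[F] V')) '' P) = DimSet P := by
  obtain ⟨hbot, huniq⟩ := h
  refine ⟨⟨?_, ?_⟩, ?_⟩
  · rintro W ⟨W₀, hW₀, rfl⟩
    intro hc
    apply hbot W₀ hW₀
    have := Submodule.map_injective_of_injective (f := (e : V →ₗ[F] V')) e.injective
    apply this
    simp only [Submodule.map_bot]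
    exact hc
  · intro v' hv'
    have hv : e.symm v' ≠ 0 := by
      intro hc; apply hv'
      have := congrArg e hc
      simpa using this
    obtain ⟨W, ⟨hWP, hWv⟩, hWu⟩ := huniq _ hv
    refine ⟨W.map (e : V →ₗ[F] V'), ⟨⟨W, hWP, rfl⟩, ?_⟩, ?_⟩
    · rw [Submodule.mem_map_equiv]; exact hWv
    · rintro X ⟨⟨W₀, hW₀, rfl⟩, hvX⟩
      rw [Submodule.mem_map_equiv] at hvX
      rw [hWu W₀ ⟨hW₀, hvX⟩]
  · ext d
    constructor
    · rintro ⟨W, ⟨W₀, hW₀, rfl⟩, hd⟩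
      exact ⟨W₀, hW₀, by rwa [LinearEquiv.finrank_map_eq] at hd⟩
    · rintro ⟨W₀, hW₀, hd⟩
      exact ⟨W₀.map (e : V →ₗ[F] V'), ⟨W₀, hW₀, rfl⟩, by rwa [LinearEquiv.finrank_map_eq]⟩

lemma exists_submodule_finrank {F V : Type*} [Field F] [AddCommGroup V] [Module F V]
    (W : Submodule F V) [FiniteDimensional F W] {d : ℕ} (hd : d ≤ Module.finrank F W) :
    ∃ W' : Submodule F V, W' ≤ W ∧ Module.finrank F W' = d := by
  let b : Module.Basis (Fin (Module.finrank F W)) F W := Module.finBasis F W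
  let v : Fin d → V := fun i => (b (Fin.castLE hd i) : V)
  have hli : LinearIndependent F v := by
    have h1 : LinearIndependent F fun i : Fin d => b (Fin.castLE hd i) :=
      b.linearIndependent.comp _ (Fin.castLE_injective hd)
    exact h1.map' W.subtype W.ker_subtype
  refine ⟨Submodule.span F (Set.range v), ?_, ?_⟩
  · rw [Submodule.span_le]
    rintro x ⟨i, rfl⟩
    exact (b (Fin.castLE hd i)).2
  · rw [finrank_span_eq_card hli, Fintype.card_fin]

theorem stmt17 (q n : ℕ) (F : Type) [Field F] [Fintype F]
    (hq : Fintype.card F = q)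
    (T : Finset ℕ) (hpos : ∀ m ∈ T, 0 < m) (hcard : 2 ≤ T.card)
    (nk nk1 : ℕ) (hnk : nk ∈ T) (hmax : ∀ m ∈ T, m ≤ nk)
    (hnk1 : nk1 ∈ T) (hlt : nk1 < nk) (hsecond : ∀ m ∈ T, m ≠ nk → m ≤ nk1)
    (hone : 1 ∈ T)
    (hnkn : nk < n) (hsum : n = nk + nk1) (h2nk : n < 2 * nk) :
    ∃ P : Set (Submodule F (Fin n → F)),
      IsVPartition P ∧ DimSet P = ↑T := by
  classical
  have hnk1pos : 0 < nk1 := hpos _ hnk1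
  have hnkpos : 0 < nk := hpos _ hnk
  obtain ⟨E, _instE, ψ, _finE, hcardE⟩ := exists_finite_field_ext F nk (by omega)
  letI : Algebra F E := ψ.toAlgebra
  haveI := _finE
  haveI : FiniteDimensional F E := Module.Finite.of_finite
  haveI : Fintype E := Fintype.ofFinite E
  have hq2 : 2 ≤ Fintype.card F := Fintype.one_lt_card
  have hrankE : Module.finrank F E = nk := by
    have h1 : Fintype.card E = Fintype.card F ^ Module.finrank F E := Module.card_eq_pow_finrank
    rw [← Nat.card_eq_fintype_card, hcardE] at h1
    exact Nat.pow_right_injective hq2 h1.symm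
  set U := (Fin nk1 → F) with hU
  -- injective linear map ι : U → E
  let gfin : Fin nk → Fin nk1 := fun i => ⟨i.1 % nk1, Nat.mod_lt _ hnk1pos⟩
  have hgsurj : Function.Surjective gfin := by
    intro j
    exact ⟨⟨j.1, lt_trans j.2 hlt⟩, by
      apply Fin.ext; simp [gfin, Nat.mod_eq_of_lt j.2]⟩
  let bE : Module.Basis (Fin nk) F E := Module.finBasisOfFinrankEq F E hrankE
  let ι : U →ₗ[F] E := bE.equivFun.symm.toLinearMap ∘ₗ LinearMap.funLeft F F gfin
  have hι : Function.Injective ι :=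
    bE.equivFun.symm.injective.comp (LinearMap.funLeft_injective_of_surjective F F gfin hgsurj)
  -- the components
  let Cinf : Submodule F (E × U) := LinearMap.range (LinearMap.inl F E U)
  have hmemCinf : ∀ v : E × U, v ∈ Cinf ↔ v.2 = 0 := by
    intro v
    constructor
    · rintro ⟨y, rfl⟩; rfl
    · intro h
      exact ⟨v.1, Prod.ext_iff.mpr ⟨rfl, h.symm⟩⟩
  have hrankCinf : Module.finrank F Cinf = nk := by
    rw [LinearMap.finrank_range_of_inj LinearMap.inl_injective, hrankE]
  let L : E → (U →ₗ[F] E × U) := fun α =>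
    LinearMap.prod ((LinearMap.mulLeft F α) ∘ₗ ι) LinearMap.id
  let C : E → Submodule F (E × U) := fun α => LinearMap.range (L α)
  have hLapp : ∀ α u, L α u = (α * ι u, u) := fun α u => rfl
  have hmemC : ∀ (α : E) (v : E × U), v ∈ C α ↔ v.1 = α * ι v.2 := by
    intro α v
    constructor
    · rintro ⟨u, rfl⟩; rfl
    · intro h
      exact ⟨v.2, Prod.ext_iff.mpr ⟨h.symm, rfl⟩⟩
  have hLinj : ∀ α, Function.Injective (L α) := by
    intro α u1 u2 h
    have := congrArg Prod.snd h
    simpa [hLapp] using this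
  have hrankC : ∀ α, Module.finrank F (C α) = nk1 := by
    intro α
    rw [LinearMap.finrank_range_of_inj (hLinj α)]
    exact Module.finrank_fin_fun F
  -- coarse partition property
  have hcoarse : ∀ v : E × U, v ≠ 0 →
      (v ∈ Cinf ∧ ∀ α, v ∉ C α) ∨ ((∃! α, v ∈ C α) ∧ v ∉ Cinf) := by
    intro v hv
    by_cases h2 : v.2 = 0
    · left
      refine ⟨(hmemCinf v).mpr h2, ?_⟩
      intro α hα
      rw [hmemC] at hα
      apply hv
      have h1 : v.1 = 0 := by rw [hα, h2, map_zero, mul_zero]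
      exact Prod.ext_iff.mpr ⟨h1, h2⟩
    · right
      have hιv : ι v.2 ≠ 0 := fun hc => h2 (hι (by rw [hc, map_zero]))
      refine ⟨⟨v.1 * (ι v.2)⁻¹, ?_, ?_⟩, ?_⟩
      · show v ∈ C (v.1 * (ι v.2)⁻¹)
        rw [hmemC]
        exact (inv_mul_cancel_right₀ hιv v.1).symm
      · intro β hβ
        rw [hmemC] at hβ
        rw [hβ, mul_inv_cancel_right₀ hιv]
      · rw [hmemCinf]; exact h2
  -- target function
  set T' : Finset ℕ := T.erase nk with hT'
  have hT'sub : ∀ m ∈ T', 1 ≤ m ∧ m ≤ nk1 := by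
    intro m hm
    obtain ⟨hmne, hmT⟩ := Finset.mem_erase.mp hm
    exact ⟨hpos m hmT, hsecond m hmT hmne⟩
  have hcardT' : T'.card ≤ nk1 := by
    have hsub : T' ⊆ Finset.Icc 1 nk1 := by
      intro m hm
      obtain ⟨h1, h2⟩ := hT'sub m hm
      exact Finset.mem_Icc.mpr ⟨h1, h2⟩
    calc T'.card ≤ (Finset.Icc 1 nk1).card := Finset.card_le_card hsub
      _ = nk1 := by rw [Nat.card_Icc]; omega
  have hcardE2 : nk1 < Fintype.card E := by
    have h1 : Fintype.card E = Fintype.card F ^ nk := by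
      rw [← Nat.card_eq_fintype_card, hcardE]
    have h2 : nk < 2 ^ nk := Nat.lt_two_pow_self
    have h3 : (2 : ℕ) ^ nk ≤ Fintype.card F ^ nk := Nat.pow_le_pow_left hq2 nk
    omega
  obtain ⟨emb⟩ : Nonempty (T' ↪ E) := by
    rw [Function.Embedding.nonempty_iff_card_le, Fintype.card_coe]
    omega
  let g : E → ℕ := fun α => if h' : ∃ d : T', emb d = α then (h'.choose : ℕ) else nk1
  have hgmem : ∀ α, g α ∈ T' := by
    intro α
    by_cases h' : ∃ d : T', emb d = α
    · simp only [g, dif_pos h']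
      exact h'.choose.2
    · simp only [g, dif_neg h']
      exact Finset.mem_erase.mpr ⟨Nat.ne_of_lt hlt, hnk1⟩
  have hgsurj2 : ∀ d ∈ T', ∃ α, g α = d := by
    intro d hd
    refine ⟨emb ⟨d, hd⟩, ?_⟩
    have h' : ∃ d' : T', emb d' = emb ⟨d, hd⟩ := ⟨⟨d, hd⟩, rfl⟩
    simp only [g, dif_pos h']
    have := emb.injective h'.choose_spec
    rw [this]
  -- the distinguished subspaces of each C α
  have hWd : ∀ α : E, ∃ W' : Submodule F (E × U), W' ≤ C α ∧ Module.finrank F W' = g α := by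
    intro α
    apply exists_submodule_finrank
    rw [hrankC α]
    exact (hT'sub _ (hgmem α)).2
  choose Wd hWdle hWdrank using hWd
  -- the refined partition of each C α
  let Q : E → Set (Submodule F (E × U)) := fun α =>
    insert (Wd α) {X | ∃ v : E × U, v ∈ C α ∧ v ∉ Wd α ∧ X = Submodule.span F {v}}
  have hQle : ∀ α, ∀ X ∈ Q α, X ≤ C α := by
    intro α X hX
    rcases Set.mem_insert_iff.mp hX with rfl | ⟨v, hv, _, rfl⟩
    · exact hWdle α
    · rw [Submodule.span_singleton_le_iff_mem]; exact hv
  have hQbot : ∀ α, ∀ X ∈ Q α, X ≠ ⊥ := by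
    intro α X hX
    rcases Set.mem_insert_iff.mp hX with rfl | ⟨v, _, hv2, rfl⟩
    · intro hc
      have := hWdrank α
      rw [hc, finrank_bot] at this
      have := (hT'sub _ (hgmem α)).1
      omega
    · rw [Ne, Submodule.span_singleton_eq_bot]
      intro hc
      exact hv2 (hc ▸ (Wd α).zero_mem)
  have hQuniq : ∀ α, ∀ v ∈ C α, v ≠ 0 → ∃! X, X ∈ Q α ∧ v ∈ X := by
    intro α v hv hv0
    by_cases hw : v ∈ Wd α
    · refine ⟨Wd α, ⟨Set.mem_insert _ _, hw⟩, ?_⟩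
      rintro X ⟨hX, hvX⟩
      rcases Set.mem_insert_iff.mp hX with rfl | ⟨w, hwC, hwW, rfl⟩
      · rfl
      · exfalso
        rw [Submodule.mem_span_singleton] at hvX
        obtain ⟨c, rfl⟩ := hvX
        have hc : c ≠ 0 := by rintro rfl; simp at hv0
        apply hwW
        have hw' : w = c⁻¹ • (c • w) := by
          rw [smul_smul, inv_mul_cancel₀ hc, one_smul]
        rw [hw']
        exact Submodule.smul_mem _ _ hw
    · refine ⟨Submodule.span F {v},
        ⟨Set.mem_insert_iff.mpr (Or.inr ⟨v, hv, hw, rfl⟩),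
          Submodule.mem_span_singleton_self v⟩, ?_⟩
      rintro X ⟨hX, hvX⟩
      rcases Set.mem_insert_iff.mp hX with rfl | ⟨w, hwC, hwW, rfl⟩
      · exact absurd hvX hw
      · rw [Submodule.mem_span_singleton] at hvX
        obtain ⟨c, rfl⟩ := hvX
        have hc : c ≠ 0 := by rintro rfl; simp at hv0
        exact (Submodule.span_singleton_smul_eq (IsUnit.mk0 c hc) w).symm
  -- the global partition
  let P : Set (Submodule F (E × U)) := insert Cinf (⋃ α : E, Q α)
  have hPart : IsVPartition P := by
    constructor
    · intro W hW
      rcases Set.mem_insert_iff.mp hW with rfl | hW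
      · intro hc
        have h1 : ((1 : E), (0 : U)) ∈ Cinf := (hmemCinf _).mpr rfl
        rw [hc, Submodule.mem_bot] at h1
        exact one_ne_zero (congrArg Prod.fst h1)
      · obtain ⟨Qα, ⟨α, rfl⟩, hWQ⟩ := hW
        exact hQbot α W hWQ
    · intro v hv
      rcases hcoarse v hv with ⟨hvC, hnotC⟩ | ⟨⟨α, hα, hαu⟩, hnotinf⟩
      · refine ⟨Cinf, ⟨Set.mem_insert _ _, hvC⟩, ?_⟩
        rintro X ⟨hX, hvX⟩
        rcases Set.mem_insert_iff.mp hX with rfl | hX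
        · rfl
        · obtain ⟨Qα, ⟨α, rfl⟩, hXQ⟩ := hX
          exact absurd (hQle α X hXQ hvX) (hnotC α)
      · obtain ⟨X, ⟨hXQ, hXv⟩, hXu⟩ := hQuniq α v hα hv
        refine ⟨X, ⟨Set.mem_insert_iff.mpr (Or.inr (Set.mem_iUnion.mpr ⟨α, hXQ⟩)), hXv⟩, ?_⟩
        rintro Y ⟨hY, hvY⟩
        rcases Set.mem_insert_iff.mp hY with rfl | hY
        · exact absurd hvY hnotinf
        · obtain ⟨Qβ, ⟨β, rfl⟩, hYQ⟩ := hY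
          have hβ : β = α := hαu β (hQle β Y hYQ hvY)
          subst hβ
          exact hXu Y ⟨hYQ, hvY⟩
  have hDim : DimSet P = (↑T : Set ℕ) := by
    ext d
    constructor
    · rintro ⟨W, hW, rfl⟩
      rcases Set.mem_insert_iff.mp hW with rfl | hW
      · rw [hrankCinf]; exact hnk
      · obtain ⟨Qα, ⟨α, rfl⟩, hWQ⟩ := hW
        rcases Set.mem_insert_iff.mp hWQ with rfl | ⟨v, _, hv2, rfl⟩
        · rw [hWdrank α]
          exact Finset.mem_of_mem_erase (hgmem α)
        · have hvne : v ≠ 0 := fun hc => hv2 (hc ▸ (Wd α).zero_mem)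
          rw [finrank_span_singleton hvne]
          exact hone
    · intro hd
      by_cases hdnk : d = nk
      · subst hdnk
        exact ⟨Cinf, Set.mem_insert _ _, hrankCinf⟩
      · have hd' : d ∈ T' := Finset.mem_erase.mpr ⟨hdnk, hd⟩
        obtain ⟨α, hα⟩ := hgsurj2 d hd'
        exact ⟨Wd α, Set.mem_insert_iff.mpr
          (Or.inr (Set.mem_iUnion.mpr ⟨α, Set.mem_insert _ _⟩)), by rw [hWdrank α, hα]⟩
  -- transport along a linear equivalence
  have hfr : Module.finrank F (E × U) = Module.finrank F (Fin n → F) := by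
    rw [Module.finrank_prod, hrankE,
      show Module.finrank F U = nk1 from Module.finrank_fin_fun F,
      show Module.finrank F (Fin n → F) = n from Module.finrank_fin_fun F]
    omega
  obtain ⟨e⟩ := FiniteDimensional.nonempty_linearEquiv_of_finrank_eq hfr
  obtain ⟨hp1, hp2⟩ := vpartition_transport e P hPart
  exact ⟨_, hp1, by rw [hp2, hDim]⟩
end

section
/- Let P be a non-trivial partition of V_n(q) whose set S of minimum-dimension components has size at least 3. Then there exists a hyperplane W of V_n(q) that contains at least one component of S but does not contain all components of S. -/
open scoped Classical

theorem stmt19 (q n t : ℕ) (F : Type) [Field F] [Fintype F]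
    (hq : Fintype.card F = q) (hn : 2 ≤ n)
    (P : Finset (Submodule F (Fin n → F)))
    (hP : IsVPartition (↑P : Set (Submodule F (Fin n → F))))
    (hprop : ∀ W ∈ P, W ≠ ⊤) (hr : 2 ≤ P.card)
    (hmin : ∀ Vi ∈ P, t ≤ Module.finrank F Vi)
    (hex : ∃ Vi ∈ P, Module.finrank F Vi = t)
    (h2t : 2 * t ≤ n)
    (hS : 3 ≤ (P.filter (fun (Vi : Submodule F (Fin n → F)) => Module.finrank F Vi = t)).card) :
    ∃ W : Submodule F (Fin n → F), Module.finrank F W = n - 1 ∧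
      (∃ V1 ∈ P.filter (fun (Vi : Submodule F (Fin n → F)) => Module.finrank F Vi = t), V1 ≤ W) ∧
      (∃ V2 ∈ P.filter (fun (Vi : Submodule F (Fin n → F)) => Module.finrank F Vi = t), ¬ V2 ≤ W) := by
  set S := P.filter (fun (Vi : Submodule F (Fin n → F)) => Module.finrank F Vi = t) with hSdef
  have h1 : 1 < S.card := by omega
  obtain ⟨V1, hV1, V2, hV2, hne⟩ := Finset.one_lt_card.mp h1
  have hV1P : V1 ∈ P := (Finset.mem_filter.mp hV1).1
  have hV2P : V2 ∈ P := (Finset.mem_filter.mp hV2).1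
  -- get a nonzero vector in V2
  have hV2bot : V2 ≠ ⊥ := hP.1 V2 (by exact_mod_cast hV2P)
  obtain ⟨v, hvV2, hv0⟩ := Submodule.ne_bot_iff V2 |>.mp hV2bot
  -- v ∉ V1 by uniqueness
  have hvV1 : v ∉ V1 := by
    intro hmem
    obtain ⟨W, -, huniq⟩ := hP.2 v hv0
    exact hne ((huniq V1 ⟨by exact_mod_cast hV1P, hmem⟩).trans
      (huniq V2 ⟨by exact_mod_cast hV2P, hvV2⟩).symm)
  -- build a functional vanishing on V1 but not on v
  set π := V1.mkQ with hπ
  have hπv : π v ≠ 0 := by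
    simpa [hπ, Submodule.Quotient.mk_eq_zero] using hvV1
  obtain ⟨f, hf⟩ : ∃ f : Module.Dual F ((Fin n → F) ⧸ V1), f (π v) ≠ 0 := by
    by_contra h
    push_neg at h
    exact hπv ((Module.forall_dual_apply_eq_zero_iff F (π v)).mp h)
  set φ := f.comp π with hφ
  have hφv : φ v ≠ 0 := hf
  refine ⟨LinearMap.ker φ, ?_, ⟨V1, hV1, ?_⟩, ⟨V2, hV2, ?_⟩⟩
  · -- finrank of kernel is n - 1
    have hrk := LinearMap.finrank_range_add_finrank_ker φ
    have hsurj : LinearMap.range φ = ⊤ := by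
      rcases eq_bot_or_eq_top (LinearMap.range φ) with h | h
      · exfalso
        exact hφv (by simpa [h] using
          (Submodule.eq_bot_iff _).mp h (φ v) ⟨v, rfl⟩)
      · exact h
    rw [hsurj] at hrk
    have h1 : Module.finrank F (⊤ : Submodule F F) = 1 := by
      simp [Module.finrank_self]
    have hn' : Module.finrank F (Fin n → F) = n := by
      simp [Module.finrank_fin_fun]
    rw [h1, hn'] at hrk
    omega
  · intro x hx
    simp only [LinearMap.mem_ker, hφ, LinearMap.comp_apply]
    have : π x = 0 := by simpa [hπ, Submodule.Quotient.mk_eq_zero] using hx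
    simp [this]
  · intro hle
    exact hφv (hle hvV2)
end
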